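/- In any pure Nash equilibrium θ† of a test-time compute game with perfectly rational users, the dominant provider selects θ†_1 = max{θ_1 ∈ Θ : V_1(θ_1) > V*_2}, the largest (with respect to the total order on Θ) compute level under which their offered value still strictly exceeds the best achievable value of any competitor. -/
import Mathlib


open scoped Classical

/-- Utility of provider `i` in the test-time compute game with perfectly rational users:
full market share iff the offered value `V_i(θ_i) = q_i(θ_i) − p_i(θ_i)` strictly exceeds
every competitor's offered value and the abstention value `V₀`, times the profit. -/
noncomputable def perfectU (N : ℕ) (Θ : Type*) (p c q : Fin N → Θ → ℝ) (V₀ : ℝ)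
    (i : Fin N) (θv : Fin N → Θ) : ℝ :=
  (if (∀ j, j ≠ i → q j (θv j) - p j (θv j) < q i (θv i) - p i (θv i)) ∧
      V₀ < q i (θv i) - p i (θv i) then (1 : ℝ) else 0) * (p i (θv i) - c i (θv i))

/-- **The dominant provider's equilibrium compute level.** In any pure Nash equilibrium
`θ†` of a test-time compute game with perfectly rational users, the dominant provider
(index `0`) selects `θ†_1 = max {θ : V_1(θ) > V*_2}`: the largest compute level (w.r.t. the
total order on `Θ`) under which their offered value still strictly exceeds the best
achievable value `V*_2` of any competitor. Here `V_1(θ) > V*_2` is expressed as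
`∀ i ≠ 0, ∀ θᵢ, V_i(θᵢ) < V_1(θ)`. -/
theorem dominant_provider_equilibrium_compute (N : ℕ) (Θ : Type*) [Fintype Θ] [Nonempty Θ]
    [LinearOrder Θ] (p c q : Fin N → Θ → ℝ) (V₀ : ℝ)
    (hN : 2 ≤ N)
    (hties : ∀ (i j : Fin N) (t t' : Θ), i ≠ j →
      q i t - p i t ≠ q j t' - p j t')
    (hprofit : ∀ (i : Fin N) (t : Θ), 0 < p i t - c i t)
    (hmono : ∀ i : Fin N, StrictMono (fun t => p i t - c i t))
    (hV₀ : ∀ (i : Fin N) (t : Θ), V₀ < q i t - p i t)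
    (hdom : ∀ i : Fin N, i ≠ ⟨0, by omega⟩ → ∃ t₀ : Θ, ∀ t : Θ,
      q i t - p i t < q (⟨0, by omega⟩ : Fin N) t₀ - p (⟨0, by omega⟩ : Fin N) t₀)
    (hex : ∃ t₁ : Θ, ∀ i : Fin N, i ≠ ⟨0, by omega⟩ → ∀ t : Θ,
      q i t - p i t < q (⟨0, by omega⟩ : Fin N) t₁ - p (⟨0, by omega⟩ : Fin N) t₁)
    (θd : Fin N → Θ)
    (hNE : ∀ (i : Fin N) (t' : Θ),
      perfectU N Θ p c q V₀ i (Function.update θd i t') ≤ perfectU N Θ p c q V₀ i θd) :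
    (∀ i : Fin N, i ≠ ⟨0, by omega⟩ → ∀ t : Θ,
      q i t - p i t <
        q (⟨0, by omega⟩ : Fin N) (θd ⟨0, by omega⟩) -
          p (⟨0, by omega⟩ : Fin N) (θd ⟨0, by omega⟩)) ∧
    (∀ t₁ : Θ,
      (∀ i : Fin N, i ≠ ⟨0, by omega⟩ → ∀ t : Θ,
        q i t - p i t < q (⟨0, by omega⟩ : Fin N) t₁ - p (⟨0, by omega⟩ : Fin N) t₁) →
      t₁ ≤ θd ⟨0, by omega⟩) := by
  set z : Fin N := ⟨0, by omega⟩ with hzdef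
  -- deviation lemma for provider 0
  have key : ∀ t' : Θ,
      (∀ j, j ≠ z → q j (θd j) - p j (θd j) < q z t' - p z t') →
      p z t' - c z t' ≤ perfectU N Θ p c q V₀ z θd := by
    intro t' h
    have hcond : (∀ j, j ≠ z →
        q j (Function.update θd z t' j) - p j (Function.update θd z t' j) <
          q z (Function.update θd z t' z) - p z (Function.update θd z t' z)) ∧
        V₀ < q z (Function.update θd z t' z) - p z (Function.update θd z t' z) := by
      constructor
      · intro j hj
        rw [Function.update_of_ne hj, Function.update_self]
        exact h j hj
      · rw [Function.update_self]; exact hV₀ z t'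
    calc p z t' - c z t' = perfectU N Θ p c q V₀ z (Function.update θd z t') := by
          unfold perfectU
          rw [if_pos hcond, Function.update_self, one_mul]
      _ ≤ _ := hNE z t'
  obtain ⟨t₁, ht₁⟩ := hex
  -- provider 0 wins at equilibrium
  have h1 : ∀ j, j ≠ z → q j (θd j) - p j (θd j) < q z (θd z) - p z (θd z) := by
    by_contra hcon
    push_neg at hcon
    obtain ⟨j, hj, hge⟩ := hcon
    have hk := key t₁ (fun j hj => ht₁ j hj (θd j))
    have hzero : perfectU N Θ p c q V₀ z θd = 0 := by
      unfold perfectU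
      rw [if_neg]
      · ring
      rintro ⟨hall, -⟩
      exact absurd (hall j hj) (not_lt.mpr hge)
    rw [hzero] at hk
    linarith [hprofit z t₁]
  refine ⟨?_, ?_⟩
  · intro i hi t
    by_contra hcon
    push_neg at hcon
    have hlt : q z (θd z) - p z (θd z) < q i t - p i t :=
      lt_of_le_of_ne hcon (hties z i (θd z) t (Ne.symm hi))
    -- provider i's equilibrium utility is 0
    have hzero : perfectU N Θ p c q V₀ i θd = 0 := by
      unfold perfectU
      rw [if_neg]
      · ring
      rintro ⟨hall, -⟩
      exact absurd (hall z (Ne.symm hi)) (not_lt.mpr (le_of_lt (h1 i hi)))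
    -- deviation to t gives positive utility
    have hcond : (∀ j, j ≠ i →
        q j (Function.update θd i t j) - p j (Function.update θd i t j) <
          q i (Function.update θd i t i) - p i (Function.update θd i t i)) ∧
        V₀ < q i (Function.update θd i t i) - p i (Function.update θd i t i) := by
      constructor
      · intro j hj
        rw [Function.update_of_ne hj, Function.update_self]
        by_cases hjz : j = z
        · subst hjz; exact hlt
        · exact lt_trans (h1 j hjz) hlt
      · rw [Function.update_self]; exact hV₀ i t
    have hdev : perfectU N Θ p c q V₀ i (Function.update θd i t) = p i t - c i t := by
      unfold perfectU
      rw [if_pos hcond, Function.update_self, one_mul]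
    have := hNE i t
    rw [hdev, hzero] at this
    linarith [hprofit i t]
  · intro t₁' ht
    by_contra hcon
    push_neg at hcon
    have hk := key t₁' (fun j hj => ht j hj (θd j))
    have hub : perfectU N Θ p c q V₀ z θd ≤ p z (θd z) - c z (θd z) := by
      unfold perfectU
      split
      · rw [one_mul]
      · rw [zero_mul]; exact le_of_lt (hprofit z (θd z))
    have := hmono z hcon
    simp only at this
    linarith
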